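/- Fix integers n, m ≥ 1 and constants 0 ≤ δ̄ < ḡ ≤ ḡ_u. Let g be a real n×m matrix with λ_min(g·gᵀ) ≥ ḡ² and induced 2-norm ‖g‖ ≤ ḡ_u. Let κ : ℝ → ℝ be an odd, continuously differentiable, strictly increasing function, and define ρ : ℝ^n → ℝ^m by ρ(v) = −(gᵀv/‖gᵀv‖)·(ḡ/(ḡ−δ̄))·κ(‖v‖) for v ≠ 0 and ρ(0) = 0. If k is a constant such that k ≥ (ḡ/(ḡ−δ̄))·( (ḡ_u/ḡ)·κ(s)/s + κ′(s) ) for every s > 0, then ρ is Lipschitz with constant k, i.e., ‖ρ(v) − ρ(v′)‖ ≤ k·‖v − v′‖ for all v, v′ ∈ ℝ^n. -/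

import Mathlib

open scoped RealInnerProductSpace

private lemma myNormDeriv {F : Type*} [NormedAddCommGroup F] [InnerProductSpace ℝ F]
    {x : F} (hx : x ≠ 0) :
    HasFDerivAt (fun y : F => ‖y‖) (‖x‖⁻¹ • (innerSL ℝ x)) x := by
  have h1 : HasFDerivAt (fun y : F => ‖y‖ ^ 2) (2 • (innerSL ℝ x)) x :=
    (hasStrictFDerivAt_norm_sq x).hasFDerivAt
  have hx2 : ‖x‖ ^ 2 ≠ 0 := by
    have : ‖x‖ ≠ 0 := norm_ne_zero_iff.mpr hx
    positivity
  have h2 := h1.sqrt hx2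
  have he : (fun y : F => Real.sqrt (‖y‖ ^ 2)) = fun y : F => ‖y‖ := by
    funext y; exact Real.sqrt_sq (norm_nonneg y)
  rw [he] at h2
  convert h2 using 1
  rw [Real.sqrt_sq (norm_nonneg x)]
  ext w
  have hxn : ‖x‖ ≠ 0 := norm_ne_zero_iff.mpr hx
  simp [two_smul]
  field_simp
  ring

private lemma myProj {F : Type*} [NormedAddCommGroup F] [InnerProductSpace ℝ F]
    (e x : F) (he : e ≠ 0) :
    ‖x - (⟪e, x⟫ / ‖e‖ ^ 2) • e‖ ≤ ‖x‖ := by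
  set t : ℝ := ⟪e, x⟫ / ‖e‖ ^ 2 with ht
  have hen : (0:ℝ) < ‖e‖ := norm_pos_iff.mpr he
  have hsq : ‖x - t • e‖ ^ 2 ≤ ‖x‖ ^ 2 := by
    have h1 : ‖x - t • e‖ ^ 2 = ‖x‖ ^ 2 - 2 * (t * ⟪e, x⟫) + t ^ 2 * ‖e‖ ^ 2 := by
      rw [@norm_sub_sq_real, real_inner_smul_right, norm_smul, mul_pow, Real.norm_eq_abs,
        sq_abs, real_inner_comm x e]
    rw [h1, ht]
    have : (⟪e, x⟫ / ‖e‖ ^ 2) ^ 2 * ‖e‖ ^ 2 = ⟪e, x⟫ ^ 2 / ‖e‖ ^ 2 := by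
      field_simp
    rw [this]
    have h2 : 0 ≤ ⟪e, x⟫ ^ 2 / ‖e‖ ^ 2 := by positivity
    have h3 : ⟪e, x⟫ / ‖e‖ ^ 2 * ⟪e, x⟫ = ⟪e, x⟫ ^ 2 / ‖e‖ ^ 2 := by field_simp
    nlinarith
  nlinarith [norm_nonneg (x - t • e), norm_nonneg x]
private noncomputable def stmt16D {n m : ℕ} (gbar δbar : ℝ)
    (g : EuclideanSpace ℝ (Fin m) →L[ℝ] EuclideanSpace ℝ (Fin n)) (κ : ℝ → ℝ)
    (x : EuclideanSpace ℝ (Fin n)) :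
    EuclideanSpace ℝ (Fin n) →L[ℝ] EuclideanSpace ℝ (Fin m) :=
  (-(gbar / (gbar - δbar) * κ ‖x‖) * ‖ContinuousLinearMap.adjoint g x‖⁻¹) •
      (ContinuousLinearMap.adjoint g)
    + (((-(gbar / (gbar - δbar) * deriv κ ‖x‖ * ‖x‖⁻¹ *
          ‖ContinuousLinearMap.adjoint g x‖⁻¹)) • innerSL ℝ x
       + (gbar / (gbar - δbar) * κ ‖x‖ * ‖ContinuousLinearMap.adjoint g x‖⁻¹ *
          ‖ContinuousLinearMap.adjoint g x‖⁻¹ * ‖ContinuousLinearMap.adjoint g x‖⁻¹) •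
          ((innerSL ℝ (ContinuousLinearMap.adjoint g x)).comp
            (ContinuousLinearMap.adjoint g))).smulRight
      (ContinuousLinearMap.adjoint g x))

private lemma stmt16_aux (n m : ℕ)
    (gbar gbaru δbar : ℝ) (hδ0 : 0 ≤ δbar) (hδg : δbar < gbar) (hgu : gbar ≤ gbaru)
    (g : EuclideanSpace ℝ (Fin m) →L[ℝ] EuclideanSpace ℝ (Fin n))
    (hgmin : ∀ p : EuclideanSpace ℝ (Fin n),
      gbar * ‖p‖ ≤ ‖ContinuousLinearMap.adjoint g p‖)
    (hgnorm : ‖g‖ ≤ gbaru)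
    (κ : ℝ → ℝ) (hκC1 : ContDiff ℝ 1 κ)
    (x : EuclideanSpace ℝ (Fin n)) (hx : x ≠ 0) :
    HasFDerivAt
      (fun y : EuclideanSpace ℝ (Fin n) =>
        (-(gbar / (gbar - δbar) * κ ‖y‖) * ‖ContinuousLinearMap.adjoint g y‖⁻¹) •
          ContinuousLinearMap.adjoint g y)
      (stmt16D gbar δbar g κ x) x := by
  rw [stmt16D]
  set A := ContinuousLinearMap.adjoint g with hA
  set c := gbar / (gbar - δbar) with hcdef
  have hgb : 0 < gbar := lt_of_le_of_lt hδ0 hδg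
  have hxs : (0:ℝ) < ‖x‖ := norm_pos_iff.mpr hx
  have hAxn : (0:ℝ) < ‖A x‖ := lt_of_lt_of_le (by positivity) (hgmin x)
  have hAx : A x ≠ 0 := by
    intro h; rw [h] at hAxn; simp at hAxn
  -- derivative of the norm
  have hN : HasFDerivAt (fun y : EuclideanSpace ℝ (Fin n) => ‖y‖)
      (‖x‖⁻¹ • innerSL ℝ x) x := myNormDeriv hx
  have hM : HasFDerivAt (fun y : EuclideanSpace ℝ (Fin n) => ‖A y‖)
      ((‖A x‖⁻¹ • innerSL ℝ (A x)).comp A) x :=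
    (myNormDeriv hAx).comp x A.hasFDerivAt
  have hκn : HasFDerivAt (fun y : EuclideanSpace ℝ (Fin n) => κ ‖y‖)
      (deriv κ ‖x‖ • (‖x‖⁻¹ • innerSL ℝ x)) x :=
    ((hκC1.differentiable one_ne_zero ‖x‖).hasDerivAt).comp_hasFDerivAt x hN
  have hu : HasFDerivAt (fun y : EuclideanSpace ℝ (Fin n) => -(c * κ ‖y‖))
      (-(c • (deriv κ ‖x‖ • (‖x‖⁻¹ • innerSL ℝ x)))) x :=
    (hκn.const_mul c).neg
  have hw : HasFDerivAt (fun y : EuclideanSpace ℝ (Fin n) => ‖A y‖⁻¹)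
      ((-(‖A x‖ ^ 2)⁻¹) • ((‖A x‖⁻¹ • innerSL ℝ (A x)).comp A)) x :=
    (hasDerivAt_inv (ne_of_gt hAxn)).comp_hasFDerivAt x hM
  have hφ := hu.mul hw
  have hF := hφ.smul A.hasFDerivAt
  refine hF.congr_fderiv ?_
  refine ContinuousLinearMap.ext fun w => ?_
  simp only [ContinuousLinearMap.add_apply, ContinuousLinearMap.smul_apply,
    ContinuousLinearMap.smulRight_apply, ContinuousLinearMap.comp_apply,
    ContinuousLinearMap.neg_apply, innerSL_apply_apply, smul_eq_mul, neg_smul, neg_neg,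
    smul_smul, Pi.mul_apply]
  rw [show ((‖A x‖ ^ 2)⁻¹ : ℝ) = ‖A x‖⁻¹ * ‖A x‖⁻¹ by rw [sq, mul_inv]]
  module

set_option maxHeartbeats 1000000 in
theorem stmt16 (n m : ℕ) (hn : 1 ≤ n) (hm : 1 ≤ m)
    (gbar gbaru δbar : ℝ) (hδ0 : 0 ≤ δbar) (hδg : δbar < gbar) (hgu : gbar ≤ gbaru)
    (g : EuclideanSpace ℝ (Fin m) →L[ℝ] EuclideanSpace ℝ (Fin n))
    (hgmin : ∀ p : EuclideanSpace ℝ (Fin n),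
      gbar * ‖p‖ ≤ ‖ContinuousLinearMap.adjoint g p‖)
    (hgnorm : ‖g‖ ≤ gbaru)
    (κ : ℝ → ℝ) (hκodd : ∀ s, κ (-s) = -κ s) (hκC1 : ContDiff ℝ 1 κ)
    (hκmono : StrictMono κ)
    (ρ : EuclideanSpace ℝ (Fin n) → EuclideanSpace ℝ (Fin m))
    (hρ0 : ρ 0 = 0)
    (hρ : ∀ v : EuclideanSpace ℝ (Fin n), v ≠ 0 →
      ρ v = -((gbar / (gbar - δbar)) * κ ‖v‖) •
        ((‖ContinuousLinearMap.adjoint g v‖)⁻¹ • ContinuousLinearMap.adjoint g v))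
    (k : ℝ)
    (hk : ∀ s : ℝ, 0 < s →
      gbar / (gbar - δbar) * (gbaru / gbar * (κ s / s) + deriv κ s) ≤ k) :
    ∀ v v' : EuclideanSpace ℝ (Fin n), ‖ρ v - ρ v'‖ ≤ k * ‖v - v'‖ := by
  classical
  set A := ContinuousLinearMap.adjoint g with hA
  set c := gbar / (gbar - δbar) with hcdef
  have hgb : 0 < gbar := lt_of_le_of_lt hδ0 hδg
  have hgbu : 0 < gbaru := lt_of_lt_of_le hgb hgu
  have hc : 0 < c := div_pos hgb (by linarith)
  have hκ0 : κ 0 = 0 := by have h := hκodd 0; rw [neg_zero] at h; linarith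
  have hκd : Differentiable ℝ κ := hκC1.differentiable one_ne_zero
  have hκ' : ∀ s : ℝ, 0 ≤ deriv κ s := by
    intro s
    have hd : HasDerivAt κ (deriv κ s) s := (hκd s).hasDerivAt
    have ht : Filter.Tendsto (slope κ s) (nhdsWithin s (Set.Ioi s)) (nhds (deriv κ s)) :=
      (hasDerivAt_iff_tendsto_slope.mp hd).mono_left
        (nhdsWithin_mono s (fun y hy => ne_of_gt hy))
    refine ge_of_tendsto ht ?_
    filter_upwards [self_mem_nhdsWithin] with t ht'
    rw [slope_def_field]
    have h1 : s < t := ht'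
    exact div_nonneg (by have := (hκmono h1).le; linarith) (by linarith)
  have hκpos : ∀ s : ℝ, 0 < s → 0 < κ s := by
    intro s hs; have := hκmono hs; rwa [hκ0] at this
  have hgr : (1:ℝ) ≤ gbaru / gbar := (one_le_div hgb).mpr hgu
  have hk0 : 0 ≤ k := by
    refine le_trans ?_ (hk 1 one_pos)
    have h1 : 0 ≤ κ 1 / 1 := by
      have := (hκpos 1 one_pos).le; simpa using this
    have h2 : 0 ≤ deriv κ 1 := hκ' 1
    positivity
  have hck : ∀ s : ℝ, 0 < s → c * κ s ≤ k * s := by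
    intro s hs
    have h1 := hk s hs
    have h2 : c * (κ s / s) ≤ c * (gbaru / gbar * (κ s / s) + deriv κ s) := by
      have hκs : 0 ≤ κ s / s := div_nonneg (hκpos s hs).le hs.le
      nlinarith [hκ' s, mul_le_mul_of_nonneg_left (mul_le_mul_of_nonneg_right hgr hκs) hc.le]
    have h3 : c * (κ s / s) ≤ k := le_trans h2 h1
    calc c * κ s = c * (κ s / s) * s := by field_simp
    _ ≤ k * s := mul_le_mul_of_nonneg_right h3 hs.le
  have hAmin : ∀ p, gbar * ‖p‖ ≤ ‖A p‖ := hgmin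
  have hAop : ∀ w : EuclideanSpace ℝ (Fin n), ‖A w‖ ≤ gbaru * ‖w‖ := by
    intro w
    calc ‖A w‖ ≤ ‖A‖ * ‖w‖ := A.le_opNorm w
    _ = ‖g‖ * ‖w‖ := by rw [hA, ContinuousLinearMap.adjoint.norm_map g]
    _ ≤ gbaru * ‖w‖ := mul_le_mul_of_nonneg_right hgnorm (norm_nonneg w)
  have hρle : ∀ w : EuclideanSpace ℝ (Fin n), ‖ρ w‖ ≤ k * ‖w‖ := by
    intro w
    rcases eq_or_ne w 0 with rfl | hw
    · simp [hρ0]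
    · have hws : (0:ℝ) < ‖w‖ := norm_pos_iff.mpr hw
      have hAwn : (0:ℝ) < ‖A w‖ := lt_of_lt_of_le (by positivity) (hAmin w)
      rw [hρ w hw]
      rw [norm_smul, norm_smul, norm_inv, norm_norm, Real.norm_eq_abs, abs_neg,
        abs_of_nonneg (mul_nonneg hc.le (hκpos ‖w‖ hws).le)]
      have : ‖A w‖⁻¹ * ‖A w‖ = 1 := inv_mul_cancel₀ (ne_of_gt hAwn)
      rw [this, mul_one]
      exact hck ‖w‖ hws
  intro v v'
  by_cases h0 : (0 : EuclideanSpace ℝ (Fin n)) ∈ segment ℝ v v'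
  · have hwb : Wbtw ℝ v (0 : EuclideanSpace ℝ (Fin n)) v' := mem_segment_iff_wbtw.mp h0
    have hd := hwb.dist_add_dist
    calc ‖ρ v - ρ v'‖ ≤ ‖ρ v‖ + ‖ρ v'‖ := norm_sub_le _ _
    _ ≤ k * ‖v‖ + k * ‖v'‖ := add_le_add (hρle v) (hρle v')
    _ = k * (dist v 0 + dist 0 v') := by
        rw [dist_eq_norm, dist_eq_norm]; simp; ring
    _ = k * dist v v' := by rw [hd]
    _ = k * ‖v - v'‖ := by rw [dist_eq_norm]
  · set S := segment ℝ v v' with hS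
    have hSc : Convex ℝ S := convex_segment v v'
    have hvS : v ∈ S := left_mem_segment ℝ v v'
    have hv'S : v' ∈ S := right_mem_segment ℝ v v'
    have hne : ∀ x ∈ S, x ≠ 0 := fun x hx h => h0 (h ▸ hx)
    set F : EuclideanSpace ℝ (Fin n) → EuclideanSpace ℝ (Fin m) :=
      fun y => (-(c * κ ‖y‖) * ‖A y‖⁻¹) • A y with hF
    have hρF : ∀ x : EuclideanSpace ℝ (Fin n), x ≠ 0 → ρ x = F x := by
      intro x hx
      rw [hρ x hx, hF, smul_smul]
    let D : EuclideanSpace ℝ (Fin n) →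
        (EuclideanSpace ℝ (Fin n) →L[ℝ] EuclideanSpace ℝ (Fin m)) :=
      fun x => stmt16D gbar δbar g κ x
    have hder : ∀ x ∈ S, HasFDerivWithinAt F (D x) S x := by
      intro x hx
      exact (stmt16_aux n m gbar gbaru δbar hδ0 hδg hgu g hgmin hgnorm κ hκC1 x
        (hne x hx)).hasFDerivWithinAt
    have hbound : ∀ x ∈ S, ‖D x‖ ≤ k := by
      intro x hx
      have hxne := hne x hx
      have hxs : (0:ℝ) < ‖x‖ := norm_pos_iff.mpr hxne
      have hAxn : (0:ℝ) < ‖A x‖ := lt_of_lt_of_le (by positivity) (hAmin x)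
      have hAx : A x ≠ 0 := fun h => by rw [h] at hAxn; simp at hAxn
      have hκx : (0:ℝ) ≤ κ ‖x‖ := (hκpos ‖x‖ hxs).le
      have hdx : (0:ℝ) ≤ deriv κ ‖x‖ := hκ' ‖x‖
      refine ContinuousLinearMap.opNorm_le_bound _ hk0 ?_
      intro w
      set T1 : EuclideanSpace ℝ (Fin m) :=
        (-(c * deriv κ ‖x‖ * ‖x‖⁻¹ * ‖A x‖⁻¹ * ⟪x, w⟫)) • A x with hT1
      set T2 : EuclideanSpace ℝ (Fin m) :=
        (-(c * κ ‖x‖ * ‖A x‖⁻¹)) • (A w - (⟪A x, A w⟫ / ‖A x‖ ^ 2) • A x) with hT2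
      have hsplit : D x w = T1 + T2 := by
        show (stmt16D gbar δbar g κ x) w = T1 + T2
        rw [stmt16D, hT1, hT2]
        simp only [ContinuousLinearMap.add_apply, ContinuousLinearMap.smul_apply,
          ContinuousLinearMap.smulRight_apply, ContinuousLinearMap.comp_apply,
          innerSL_apply_apply, smul_eq_mul]
        module
      have h1 : ‖T1‖ ≤ c * deriv κ ‖x‖ * ‖w‖ := by
        rw [hT1, norm_smul, Real.norm_eq_abs, abs_neg]
        have hq : (0:ℝ) ≤ c * deriv κ ‖x‖ * ‖x‖⁻¹ * ‖A x‖⁻¹ := by positivity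
        rw [show c * deriv κ ‖x‖ * ‖x‖⁻¹ * ‖A x‖⁻¹ * ⟪x, w⟫
            = (c * deriv κ ‖x‖ * ‖x‖⁻¹ * ‖A x‖⁻¹) * ⟪x, w⟫ by ring,
          abs_mul, abs_of_nonneg hq]
        have hCS : |⟪x, w⟫| ≤ ‖x‖ * ‖w‖ := abs_real_inner_le_norm x w
        calc c * deriv κ ‖x‖ * ‖x‖⁻¹ * ‖A x‖⁻¹ * |⟪x, w⟫| * ‖A x‖
            ≤ c * deriv κ ‖x‖ * ‖x‖⁻¹ * ‖A x‖⁻¹ * (‖x‖ * ‖w‖) * ‖A x‖ := by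
              have := mul_le_mul_of_nonneg_left hCS hq
              nlinarith [hAxn.le]
        _ = c * deriv κ ‖x‖ * ‖w‖ := by field_simp
      have h2 : ‖T2‖ ≤ c * (gbaru / gbar) * (κ ‖x‖ / ‖x‖) * ‖w‖ := by
        rw [hT2, norm_smul, Real.norm_eq_abs, abs_neg,
          abs_of_nonneg (by positivity : (0:ℝ) ≤ c * κ ‖x‖ * ‖A x‖⁻¹)]
        have hproj : ‖A w - (⟪A x, A w⟫ / ‖A x‖ ^ 2) • A x‖ ≤ ‖A w‖ :=
          myProj (A x) (A w) hAx
        have hstep : c * κ ‖x‖ * ‖A x‖⁻¹ * ‖A w - (⟪A x, A w⟫ / ‖A x‖ ^ 2) • A x‖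
            ≤ c * κ ‖x‖ * ‖A x‖⁻¹ * (gbaru * ‖w‖) := by
          have := le_trans hproj (hAop w)
          have hq : (0:ℝ) ≤ c * κ ‖x‖ * ‖A x‖⁻¹ := by positivity
          exact mul_le_mul_of_nonneg_left this hq
        refine le_trans hstep ?_
        have hinv : ‖A x‖⁻¹ ≤ (gbar * ‖x‖)⁻¹ := by
          apply inv_anti₀ (by positivity) (hAmin x)
        have hq2 : (0:ℝ) ≤ c * κ ‖x‖ * (gbaru * ‖w‖) := by positivity
        calc c * κ ‖x‖ * ‖A x‖⁻¹ * (gbaru * ‖w‖)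
            ≤ c * κ ‖x‖ * (gbar * ‖x‖)⁻¹ * (gbaru * ‖w‖) := by
              have hq3 : (0:ℝ) ≤ c * κ ‖x‖ := by positivity
              nlinarith [mul_le_mul_of_nonneg_left hinv hq3, hq2,
                mul_nonneg (mul_nonneg hc.le (hκpos ‖x‖ hxs).le) (by positivity : (0:ℝ) ≤ gbaru * ‖w‖)]
        _ = c * (gbaru / gbar) * (κ ‖x‖ / ‖x‖) * ‖w‖ := by field_simp
      calc ‖D x w‖ = ‖T1 + T2‖ := by rw [hsplit]
      _ ≤ ‖T1‖ + ‖T2‖ := norm_add_le _ _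
      _ ≤ c * deriv κ ‖x‖ * ‖w‖ + c * (gbaru / gbar) * (κ ‖x‖ / ‖x‖) * ‖w‖ :=
          add_le_add h1 h2
      _ = c * (gbaru / gbar * (κ ‖x‖ / ‖x‖) + deriv κ ‖x‖) * ‖w‖ := by ring
      _ ≤ k * ‖w‖ := mul_le_mul_of_nonneg_right (hk ‖x‖ hxs) (norm_nonneg w)
    have hmvt := hSc.norm_image_sub_le_of_norm_hasFDerivWithin_le hder hbound hv'S hvS
    rw [hρF v (hne v hvS), hρF v' (hne v' hv'S)]
    exact hmvt
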